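/- For each t with 1 ≤ t ≤ K, the maximum value of f_t is m_t = (2t-1)!, attained when r_{K-(t-1)} = ⋯ = r_K = 1, and its minimum value is 0, attained when all r-arguments and all b-arguments are 0. -/

import Mathlib

/-- The hard function `f_t` for the matroid lower bound. The arguments `r b : ℕ → ℕ`
give, for each class `i ∈ {1, …, K}`, the number `r i ∈ {0,1}` of red elements and the
number `b i` of blue elements of class `i` in the set (only indices
`K-(t-1), …, K` are relevant for `f_t`). With `b̂ i = min (b i) (2(K-i))`,
`m_t = (2t-1)!`, `δ_{t-1} = m_{t-1} - f_{t-1}(r; b̂)`, `d_t = 2(t-1) - b̂ (K-(t-1))`,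
`s_t = 1 - r (K-(t-1))`, and `a_t = 2 m_{t-1} s_t + δ_{t-1} (d_t - 1)`,
we have `f_1(r; b) = r K` and `f_t(r; b) = m_t - a_t * d_t` for `t ≥ 2`. -/
def fMat (K : ℕ) : ℕ → (ℕ → ℕ) → (ℕ → ℕ) → ℤ
  | 0, _, _ => 0
  | 1, r, _ => (r K : ℤ)
  | (t + 2), r, b =>
    let bh : ℕ → ℕ := fun i => min (b i) (2 * (K - i))
    let δ : ℤ := (Nat.factorial (2 * (t + 1) - 1) : ℤ) - fMat K (t + 1) r bh
    let d : ℤ := 2 * ((t : ℤ) + 1) - (bh (K - (t + 1)) : ℤ)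
    let s : ℤ := 1 - (r (K - (t + 1)) : ℤ)
    (Nat.factorial (2 * (t + 2) - 1) : ℤ) -
      (2 * (Nat.factorial (2 * (t + 1) - 1) : ℤ) * s + δ * (d - 1)) * d


lemma fMat_succ_succ (K n : ℕ) (r b : ℕ → ℕ) : fMat K (n+2) r b =
    (Nat.factorial (2 * (n + 2) - 1) : ℤ) -
      (2 * (Nat.factorial (2 * (n + 1) - 1) : ℤ) * (1 - (r (K - (n + 1)) : ℤ)) +
        ((Nat.factorial (2 * (n + 1) - 1) : ℤ) -
          fMat K (n + 1) r (fun i => min (b i) (2 * (K - i)))) *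
        ((2 * ((n : ℤ) + 1) - ((min (b (K - (n + 1))) (2 * (K - (K - (n + 1)))) : ℕ) : ℤ)) - 1)) *
      (2 * ((n : ℤ) + 1) - ((min (b (K - (n + 1))) (2 * (K - (K - (n + 1)))) : ℕ) : ℤ)) := by
  rfl

lemma fMat_key (K : ℕ) : ∀ n : ℕ, n + 1 ≤ K →
    ((∀ r b : ℕ → ℕ, (∀ i, r i ≤ 1) →
      fMat K (n+1) r b ≤ (Nat.factorial (2 * (n+1) - 1) : ℤ) ∧ 0 ≤ fMat K (n+1) r b) ∧
    (∀ b : ℕ → ℕ, fMat K (n+1) (fun _ => 1) b = (Nat.factorial (2 * (n+1) - 1) : ℤ)) ∧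
    fMat K (n+1) (fun _ => 0) (fun _ => 0) = 0) := by
  intro n
  induction n with
  | zero =>
    intro _
    refine ⟨fun r b hr => ?_, fun b => ?_, ?_⟩
    · simp only [fMat, Nat.factorial]
      norm_num
      exact_mod_cast hr K
    · simp [fMat, Nat.factorial]
    · simp [fMat]
  | succ n ih =>
    intro hK2
    obtain ⟨ihb, ihmax, ihmin⟩ := ih (by omega)
    set M : ℤ := (Nat.factorial (2 * (n + 1) - 1) : ℤ) with hMdef
    have hM : 0 < M := by positivity
    have hfac : (Nat.factorial (2 * (n + 2) - 1) : ℤ)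
        = (2 * (n : ℤ) + 2) * (2 * (n : ℤ) + 3) * M := by
      have h1 : 2 * (n + 2) - 1 = (2 * n + 1) + 1 + 1 := by omega
      have h2 : 2 * (n + 1) - 1 = 2 * n + 1 := by omega
      rw [hMdef, h1, h2, Nat.factorial_succ, Nat.factorial_succ]
      push_cast
      ring
    have hKsub : K - (K - (n + 1)) = n + 1 := by omega
    refine ⟨fun r b hr => ?_, fun b => ?_, ?_⟩
    · rw [fMat_succ_succ]
      set B : ℕ → ℕ := fun i => min (b i) (2 * (K - i)) with hBdef
      obtain ⟨h1, h2⟩ := ihb r B hr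
      set F : ℤ := fMat K (n+1) r B
      set D : ℤ := 2 * ((n : ℤ) + 1) - ((min (b (K - (n + 1))) (2 * (K - (K - (n + 1)))) : ℕ) : ℤ)
        with hDdef
      have hD0 : 0 ≤ D := by
        rw [hDdef, hKsub]
        have : (min (b (K - (n + 1))) (2 * (n+1)) : ℕ) ≤ 2 * (n+1) := min_le_right _ _
        have := (Nat.cast_le (α := ℤ)).2 this
        push_cast at this ⊢
        linarith
      have hD2 : D ≤ 2 * (n : ℤ) + 2 := by
        rw [hDdef]
        have : (0:ℤ) ≤ ((min (b (K - (n + 1))) (2 * (K - (K - (n + 1)))) : ℕ) : ℤ) :=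
          Nat.cast_nonneg _
        linarith
      set s : ℤ := 1 - (r (K - (n + 1)) : ℤ) with hsdef
      have hs0 : 0 ≤ s := by
        have := hr (K - (n+1))
        have := (Nat.cast_le (α := ℤ)).2 this
        simp at this
        rw [hsdef]; linarith
      have hs1 : s ≤ 1 := by
        have : (0:ℤ) ≤ (r (K - (n + 1)) : ℤ) := Nat.cast_nonneg _
        rw [hsdef]; linarith
      have hDcase : D = 0 ∨ 1 ≤ D := by omega
      constructor
      · rcases hDcase with hD | hD
        · rw [hD]; simp
        · nlinarith [mul_nonneg (mul_nonneg hM.le hs0) hD0,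
            mul_nonneg (mul_nonneg (by linarith : (0:ℤ) ≤ M - F) (by linarith : (0:ℤ) ≤ D - 1)) hD0]
      · rw [hfac]
        rcases hDcase with hD | hD
        · rw [hD]; nlinarith
        · nlinarith [mul_nonneg (mul_nonneg hM.le (by linarith : (0:ℤ) ≤ 1 - s)) hD0,
            mul_nonneg (mul_nonneg (by linarith : (0:ℤ) ≤ M - (M - F)) (by linarith : (0:ℤ) ≤ D - 1)) hD0,
            mul_nonneg (mul_nonneg hM.le (by linarith : (0:ℤ) ≤ 2 * (n:ℤ) + 2 - D))
              (by linarith : (0:ℤ) ≤ D + 1)]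
    · rw [fMat_succ_succ, ihmax]
      simp
      exact Or.inl (Or.inl (by simp [hMdef]))
    · rw [fMat_succ_succ]
      have hB : (fun i => min ((fun _ => (0:ℕ)) i) (2 * (K - i))) = (fun _ => (0:ℕ)) := by
        funext i; simp
      rw [hB, ihmin, hfac]
      simp
      ring

theorem fMat_max_min (K t : ℕ) (ht1 : 1 ≤ t) (htK : t ≤ K) :
    (∀ r b : ℕ → ℕ, (∀ i, r i ≤ 1) →
      fMat K t r b ≤ (Nat.factorial (2 * t - 1) : ℤ) ∧ 0 ≤ fMat K t r b) ∧
    (∀ b : ℕ → ℕ, fMat K t (fun _ => 1) b = (Nat.factorial (2 * t - 1) : ℤ)) ∧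
    fMat K t (fun _ => 0) (fun _ => 0) = 0 := by
  obtain ⟨n, rfl⟩ : ∃ n, t = n + 1 := ⟨t - 1, by omega⟩
  exact fMat_key K n (by omega)
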